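/- Fix integers d ≥ 1 and 1 ≤ p ≤ ⌈d/2⌉. For a permutation w of {0, 1, …, d−1} and 1 ≤ k ≤ d, call the set {w(0), …, w(k−1)} a prefix set of w. Then the minimum cardinality of a family P of permutations of {0, …, d−1} such that every nonempty subset of {0, …, d−1} of cardinality at most p is a prefix set of some element of P is exactly the binomial coefficient C(d, p). -/
import Mathlib

open Finset FinsetFamily

/-- The prefix set of a permutation `w` of `Fin d`: the image of `{0, …, k−1}`. -/
def prefSet {d : ℕ} (w : Equiv.Perm (Fin d)) (k : ℕ) : Finset (Fin d) :=
  Finset.image (fun i : Fin d => w i) (Finset.univ.filter (fun i : Fin d => (i : ℕ) < k))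

section Aux

variable {d : ℕ}

lemma filter_lt_card {k : ℕ} (hk : k ≤ d) :
    (Finset.univ.filter (fun i : Fin d => (i : ℕ) < k)).card = k := by
  have : (Finset.univ.filter (fun i : Fin d => (i : ℕ) < k)) =
      (Finset.univ : Finset (Fin k)).map (Fin.castLEEmb hk) := by
    ext i
    simp [Fin.castLEEmb]
    constructor
    · intro h; exact ⟨⟨i, h⟩, rfl⟩
    · rintro ⟨j, rfl⟩; simpa using j.isLt
  rw [this]; simp

lemma prefSet_card {k : ℕ} (w : Equiv.Perm (Fin d)) (hk : k ≤ d) : (prefSet w k).card = k := by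
  rw [prefSet, Finset.card_image_of_injective _ (Equiv.injective w), filter_lt_card hk]

lemma fullChain_perm (c : ℕ → Finset (Fin d)) (hsub : ∀ q < d, c q ⊆ c (q+1))
    (hcard : ∀ q ≤ d, (c q).card = q) :
    ∃ w : Equiv.Perm (Fin d), ∀ k ≤ d, prefSet w k = c k := by
  have hone : ∀ i : Fin d, ∃ a, c (i+1) \ c i = {a} := by
    intro i
    rw [← Finset.card_eq_one, Finset.card_sdiff_of_subset (hsub i i.isLt),
      hcard _ i.isLt, hcard _ (Nat.le_of_lt i.isLt)]
    omega
  set f : Fin d → Fin d := fun i => (hone i).choose with hf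
  have hfs : ∀ i : Fin d, c (i+1) \ c i = {f i} := fun i => (hone i).choose_spec
  have hfmem : ∀ i : Fin d, f i ∈ c (i+1) ∧ f i ∉ c i := by
    intro i
    have : f i ∈ c (i+1) \ c i := by rw [hfs i]; simp
    exact ⟨(Finset.mem_sdiff.1 this).1, (Finset.mem_sdiff.1 this).2⟩
  have hins : ∀ i : Fin d, c (i+1) = insert (f i) (c i) := by
    intro i
    ext x
    simp only [Finset.mem_insert]
    constructor
    · intro hx
      by_cases h : x ∈ c i
      · exact Or.inr h
      · left
        have : x ∈ c (i+1) \ c i := Finset.mem_sdiff.2 ⟨hx, h⟩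
        rw [hfs i] at this; simpa using this
    · rintro (rfl | hx)
      · exact (hfmem i).1
      · exact hsub i i.isLt hx
  have hmono : ∀ a b, a ≤ b → b ≤ d → c a ⊆ c b := by
    intro a b hab hbd
    induction b with
    | zero => simpa [Nat.le_zero.1 hab]
    | succ n ih =>
      rcases Nat.lt_or_ge a (n+1) with h | h
      · exact (ih (by omega) (by omega)).trans (hsub n (by omega))
      · have : a = n + 1 := by omega
        simp [this]
  have hinj : Function.Injective f := by
    intro i j hij
    by_contra hne
    rcases Ne.lt_or_gt (fun h : i = j => hne h) with h | h
    · exact (hfmem j).2 (hmono (i+1) j h j.isLt.le ((hij ▸ (hfmem i).1)))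
    · exact (hfmem i).2 (hmono (j+1) i h i.isLt.le ((hij ▸ (hfmem j).1)))
  refine ⟨Equiv.ofBijective f (Finite.injective_iff_bijective.1 hinj), ?_⟩
  intro k hk
  induction k with
  | zero =>
    have : c 0 = ∅ := Finset.card_eq_zero.1 (hcard 0 (by omega))
    simp [prefSet, this]
  | succ n ih =>
    have hn : n < d := hk
    have hfilt : (Finset.univ.filter (fun i : Fin d => (i : ℕ) < n + 1)) =
        insert ⟨n, hn⟩ (Finset.univ.filter (fun i : Fin d => (i : ℕ) < n)) := by
      ext i
      simp only [Finset.mem_filter, Finset.mem_insert, Finset.mem_univ, true_and]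
      constructor
      · intro h
        rcases Nat.lt_or_ge (i : ℕ) n with h' | h'
        · exact Or.inr h'
        · left; apply Fin.ext; simpa using by omega
      · rintro (rfl | h)
        · simp
        · omega
    rw [prefSet, hfilt, Finset.image_insert]
    rw [prefSet] at ih
    rw [ih (by omega)]
    have : (Equiv.ofBijective f (Finite.injective_iff_bijective.1 hinj)) ⟨n, hn⟩ = f ⟨n, hn⟩ := rfl
    rw [this, ← hins ⟨n, hn⟩]

lemma chain_extend_up : ∀ (n a b : ℕ) (c : ℕ → Finset (Fin d)), b + n = d → a ≤ b →
    (∀ q, a ≤ q → q < b → c q ⊆ c (q+1)) → (∀ q, a ≤ q → q ≤ b → (c q).card = q) →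
    ∃ c' : ℕ → Finset (Fin d), (∀ q, a ≤ q → q < d → c' q ⊆ c' (q+1)) ∧
      (∀ q, a ≤ q → q ≤ d → (c' q).card = q) ∧ (∀ q, a ≤ q → q ≤ b → c' q = c q) := by
  intro n
  induction n with
  | zero =>
    intro a b c hb _ hsub hcard
    have hbd : b = d := by omega
    subst hbd
    exact ⟨c, fun q hq hqd => hsub q hq hqd, fun q hq hqd => hcard q hq hqd,
      fun q _ _ => rfl⟩
  | succ n ih =>
    intro a b c hb hab hsub hcard
    · have hcb : (c b).card < d := by rw [hcard b (by omega) le_rfl]; omega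
      have : ((c b)ᶜ).Nonempty := by
        rw [← Finset.card_pos, Finset.card_compl, Fintype.card_fin]; omega
      obtain ⟨x, hx⟩ := this
      rw [Finset.mem_compl] at hx
      set c₁ : ℕ → Finset (Fin d) := fun q => if q ≤ b then c q else insert x (c b) with hc₁
      have h1 : ∀ q, a ≤ q → q < b + 1 → c₁ q ⊆ c₁ (q+1) := by
        intro q hq hq1
        rcases Nat.lt_or_ge q b with h | h
        · simp only [hc₁, if_pos (by omega : q ≤ b), if_pos (by omega : q + 1 ≤ b)]
          exact hsub q hq h
        · have : q = b := by omega
          subst this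
          simp only [hc₁, if_pos le_rfl, if_neg (by omega : ¬ q + 1 ≤ q)]
          exact Finset.subset_insert _ _
      have h2 : ∀ q, a ≤ q → q ≤ b + 1 → (c₁ q).card = q := by
        intro q hq hq1
        rcases Nat.lt_or_ge b q with h | h
        · have : q = b + 1 := by omega
          subst this
          simp only [hc₁, if_neg (by omega : ¬ b + 1 ≤ b)]
          rw [Finset.card_insert_of_notMem hx, hcard b (by omega) le_rfl]
        · simp only [hc₁, if_pos h]; exact hcard q hq h
      obtain ⟨c', hc'1, hc'2, hc'3⟩ := ih a (b+1) c₁ (by omega) (by omega) h1 h2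
      exact ⟨c', hc'1, hc'2, fun q hq hqb => by
        rw [hc'3 q hq (by omega)]; simp only [hc₁, if_pos hqb]⟩

lemma chain_extend_down : ∀ (a b : ℕ) (c : ℕ → Finset (Fin d)), a ≤ b →
    (∀ q, a ≤ q → q < b → c q ⊆ c (q+1)) → (∀ q, a ≤ q → q ≤ b → (c q).card = q) →
    ∃ c' : ℕ → Finset (Fin d), (∀ q, q < b → c' q ⊆ c' (q+1)) ∧
      (∀ q, q ≤ b → (c' q).card = q) ∧ (∀ q, a ≤ q → q ≤ b → c' q = c q) := by
  intro a
  induction a with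
  | zero =>
    intro b c _ hsub hcard
    exact ⟨c, fun q h => hsub q (Nat.zero_le _) h, fun q h => hcard q (Nat.zero_le _) h,
      fun q _ _ => rfl⟩
  | succ n ih =>
    intro b c hab hsub hcard
    have hne : (c (n+1)).Nonempty := by
      rw [← Finset.card_pos, hcard (n+1) le_rfl hab]; omega
    obtain ⟨y, hy⟩ := hne
    set c₁ : ℕ → Finset (Fin d) := fun q => if n + 1 ≤ q then c q else (c (n+1)).erase y with hc₁
    have h1 : ∀ q, n ≤ q → q < b → c₁ q ⊆ c₁ (q+1) := by
      intro q hq hqb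
      rcases Nat.lt_or_ge q (n+1) with h | h
      · have hqn : q = n := by omega
        rw [hqn]
        simp only [hc₁, if_neg (by omega : ¬ n + 1 ≤ n), if_pos (le_refl (n+1))]
        exact Finset.erase_subset _ _
      · simp only [hc₁, if_pos h, if_pos (by omega : n + 1 ≤ q + 1)]
        exact hsub q h hqb
    have h2 : ∀ q, n ≤ q → q ≤ b → (c₁ q).card = q := by
      intro q hq hqb
      rcases Nat.lt_or_ge q (n+1) with h | h
      · have hqn : q = n := by omega
        rw [hqn]
        simp only [hc₁, if_neg (by omega : ¬ n + 1 ≤ n)]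
        rw [Finset.card_erase_of_mem hy, hcard (n+1) le_rfl hab]
        omega
      · simp only [hc₁, if_pos h]; exact hcard q h hqb
    obtain ⟨c', hc'1, hc'2, hc'3⟩ := ih b c₁ (by omega) h1 h2
    exact ⟨c', hc'1, hc'2, fun q hq hqb => by
      rw [hc'3 q (by omega) hqb]; simp only [hc₁, if_pos hq]⟩

lemma chain_perm {a b : ℕ} (hab : a ≤ b) (hbd : b ≤ d) (c : ℕ → Finset (Fin d))
    (hsub : ∀ q, a ≤ q → q < b → c q ⊆ c (q+1))
    (hcard : ∀ q, a ≤ q → q ≤ b → (c q).card = q) :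
    ∃ w : Equiv.Perm (Fin d), ∀ q, a ≤ q → q ≤ b → prefSet w q = c q := by
  obtain ⟨c₁, h11, h12, h13⟩ := chain_extend_down a b c hab hsub hcard
  obtain ⟨c₂, h21, h22, h23⟩ := chain_extend_up (d - b) 0 b c₁ (by omega) (by omega)
    (fun q _ => h11 q) (fun q _ => h12 q)
  obtain ⟨w, hw⟩ := fullChain_perm c₂ (fun q hq => h21 q (by omega) hq)
    (fun q hq => h22 q (by omega) hq)
  exact ⟨w, fun q hq hqb => by
    rw [hw q (by omega), h23 q (by omega) hqb, h13 q hq hqb]⟩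

lemma upward_lym {𝒜 : Finset (Finset (Fin d))} {q : ℕ} (hq : q ≤ d)
    (h𝒜 : (𝒜 : Set (Finset (Fin d))).Sized q) :
    𝒜.card * (d - q) ≤ (∂⁺ 𝒜).card * (q + 1) := by
  have hc : ((𝒜ᶜˢ : Finset (Finset (Fin d))) : Set (Finset (Fin d))).Sized (d - q) := by
    have := h𝒜.compls
    simpa using this
  have := Finset.card_mul_le_card_shadow_mul hc
  rw [Finset.shadow_compls, Finset.card_compls, Finset.card_compls] at this
  have hcard : Fintype.card (Fin d) = d := Fintype.card_fin d
  rw [hcard] at this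
  have : 𝒜.card * (d - q) ≤ (∂⁺ 𝒜).card * (d - (d - q) + 1) := this
  have heq : d - (d - q) + 1 = q + 1 := by omega
  rwa [heq] at this

lemma exists_matching {q : ℕ} (hq : 2 * q + 1 ≤ d) :
    ∃ g : Finset (Fin d) → Finset (Fin d),
      (∀ s : Finset (Fin d), s.card = q → s ⊆ g s ∧ (g s).card = q + 1) ∧
      (∀ s s' : Finset (Fin d), s.card = q → s'.card = q → g s = g s' → s = s') := by
  classical
  set t : {s : Finset (Fin d) // s.card = q} → Finset (Finset (Fin d)) :=
    fun s => Finset.univ.filter (fun u => s.val ⊆ u ∧ u.card = q + 1) with ht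
  have hall : ∀ S : Finset {s : Finset (Fin d) // s.card = q},
      S.card ≤ (S.biUnion t).card := by
    intro S
    set 𝒜 := S.image Subtype.val with h𝒜
    have hsized : (𝒜 : Set (Finset (Fin d))).Sized q := by
      intro s hs
      simp only [h𝒜, coe_image, Set.mem_image, mem_coe] at hs
      obtain ⟨x, _, rfl⟩ := hs
      exact x.2
    have hcardA : 𝒜.card = S.card := Finset.card_image_of_injective _ Subtype.val_injective
    have hbi : S.biUnion t = ∂⁺ 𝒜 := by
      ext u
      simp only [Finset.mem_biUnion, ht, Finset.mem_filter, Finset.mem_univ, true_and,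
        Finset.mem_upShadow_iff_exists_sdiff, h𝒜, Finset.mem_image]
      constructor
      · rintro ⟨s, hs, hsu, hcu⟩
        refine ⟨s.val, ⟨s, hs, rfl⟩, hsu, ?_⟩
        rw [Finset.card_sdiff_of_subset hsu, hcu, s.2]
        omega
      · rintro ⟨v, ⟨s, hs, rfl⟩, hvu, hone⟩
        refine ⟨s, hs, hvu, ?_⟩
        have := Finset.card_sdiff_of_subset hvu
        have hv := s.2
        omega
    have hlym := upward_lym (by omega) hsized
    rw [hbi, ← hcardA]
    have hle : 𝒜.card * (q + 1) ≤ (∂⁺ 𝒜).card * (q + 1) :=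
      le_trans (Nat.mul_le_mul_left _ (by omega)) hlym
    exact Nat.le_of_mul_le_mul_right hle (by omega)
  obtain ⟨f, hfinj, hf⟩ := (Finset.all_card_le_biUnion_card_iff_exists_injective t).1 hall
  set g : Finset (Fin d) → Finset (Fin d) :=
    fun s => if h : s.card = q then f ⟨s, h⟩ else ∅ with hg
  refine ⟨g, fun s hs => ?_, fun s s' hs hs' hgg => ?_⟩
  · have := hf ⟨s, hs⟩
    simp only [ht, Finset.mem_filter, Finset.mem_univ, true_and] at this
    simp only [hg, dif_pos hs]
    exact this
  · simp only [hg, dif_pos hs, dif_pos hs'] at hgg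
    have := hfinj hgg
    exact congrArg Subtype.val this

lemma exists_G (p : ℕ) (hp2 : 2 * p ≤ d + 1) :
    ∃ G : Finset (Fin d) → Finset (Fin d),
      (∀ s : Finset (Fin d), 1 ≤ s.card → s.card < p → s ⊆ G s ∧ (G s).card = s.card + 1) ∧
      (∀ s s' : Finset (Fin d), s.card = s'.card → 1 ≤ s.card → s.card < p →
        G s = G s' → s = s') := by
  classical
  have key : ∀ q : ℕ, ∃ g : Finset (Fin d) → Finset (Fin d),
      2 * q + 1 ≤ d →
      (∀ s : Finset (Fin d), s.card = q → s ⊆ g s ∧ (g s).card = q + 1) ∧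
      (∀ s s' : Finset (Fin d), s.card = q → s'.card = q → g s = g s' → s = s') := by
    intro q
    by_cases h : 2 * q + 1 ≤ d
    · obtain ⟨g, h1, h2⟩ := exists_matching h
      exact ⟨g, fun _ => ⟨h1, h2⟩⟩
    · exact ⟨id, fun hc => absurd hc h⟩
  choose g hg using key
  refine ⟨fun s => g s.card s, fun s h1 h2 => ?_, fun s s' hss h1 h2 hG => ?_⟩
  · exact (hg s.card (by omega)).1 s rfl
  · have hgs' : g s.card s' = g s'.card s' := by rw [hss]
    exact (hg s.card (by omega)).2 s s' rfl hss.symm (by simp only [] at hG; rw [hG, hgs'])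

lemma iter_facts (p : ℕ) (G : Finset (Fin d) → Finset (Fin d))
    (hG1 : ∀ s : Finset (Fin d), 1 ≤ s.card → s.card < p → s ⊆ G s ∧ (G s).card = s.card + 1) :
    ∀ n : ℕ, ∀ s : Finset (Fin d), 1 ≤ s.card → s.card + n ≤ p →
      s ⊆ G^[n] s ∧ (G^[n] s).card = s.card + n := by
  intro n
  induction n with
  | zero => intro s h1 _; simp
  | succ n ih =>
    intro s h1 h2
    rw [Function.iterate_succ_apply]
    obtain ⟨hsub, hcard⟩ := hG1 s h1 (by omega)
    obtain ⟨ih1, ih2⟩ := ih (G s) (by omega) (by omega)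
    exact ⟨hsub.trans ih1, by rw [ih2, hcard]; omega⟩

lemma exists_good_perm (p : ℕ) (hp1 : 1 ≤ p) (hpd : p ≤ d)
    (G : Finset (Fin d) → Finset (Fin d))
    (hG1 : ∀ s : Finset (Fin d), 1 ≤ s.card → s.card < p → s ⊆ G s ∧ (G s).card = s.card + 1)
    (hG2 : ∀ s s' : Finset (Fin d), s.card = s'.card → 1 ≤ s.card → s.card < p →
      G s = G s' → s = s') (t : Finset (Fin d)) (ht : t.card = p) :
    ∃ w : Equiv.Perm (Fin d), ∀ s : Finset (Fin d), 1 ≤ s.card → s.card ≤ p →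
      G^[p - s.card] s = t → prefSet w s.card = s := by
  classical
  have hiter := iter_facts p G hG1
  have hinj : ∀ n : ℕ, ∀ s s' : Finset (Fin d), s.card = s'.card → 1 ≤ s.card →
      s.card + n ≤ p → G^[n] s = G^[n] s' → s = s' := by
    intro n
    induction n with
    | zero => intro s s' _ _ _ h; simpa using h
    | succ n ih =>
      intro s s' hss h1 h2 h
      rw [Function.iterate_succ_apply, Function.iterate_succ_apply] at h
      have hc := (hG1 s h1 (by omega)).2
      have hc' := (hG1 s' (hss ▸ h1) (hss ▸ (by omega))).2
      have := ih (G s) (G s') (by rw [hc, hc', hss]) (by omega) (by omega) h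
      exact hG2 s s' hss h1 (by omega) this
  set pres : ℕ → Prop := fun q => ∃ s : Finset (Fin d), s.card = q ∧ 1 ≤ q ∧ G^[p - q] s = t
    with hpres
  have hdecp : DecidablePred pres := fun _ => Classical.dec _
  have hpp : pres p := ⟨t, ht, hp1, by simp⟩
  set a := Nat.find ⟨p, hpp⟩ with ha
  have hpa : pres a := Nat.find_spec ⟨p, hpp⟩
  have hap : a ≤ p := Nat.find_le hpp
  have ha1 : 1 ≤ a := by obtain ⟨s, _, h, _⟩ := hpa; exact h
  have huniq : ∀ q, ∀ s s' : Finset (Fin d), s.card = q → s'.card = q → 1 ≤ q → q ≤ p →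
      G^[p - q] s = t → G^[p - q] s' = t → s = s' := by
    intro q s s' hs hs' h1 h2 hh hh'
    exact hinj (p - q) s s' (by omega) (by omega) (by omega) (by rw [hh, hh'])
  have hup : ∀ q, pres q → q < p → pres (q + 1) := by
    rintro q ⟨s, hs, h1, hh⟩ hqp
    refine ⟨G s, by rw [(hG1 s (by omega) (by omega)).2, hs], by omega, ?_⟩
    have : p - q = (p - (q+1)) + 1 := by omega
    rw [this, Function.iterate_succ_apply] at hh
    exact hh
  have hpresall : ∀ q, a ≤ q → q ≤ p → pres q := by
    intro q hq hqp
    induction q with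
    | zero => omega
    | succ n ih =>
      rcases Nat.lt_or_ge n a with h | h
      · have : n + 1 = a := by omega
        rw [this]; exact hpa
      · exact hup n (ih h (by omega)) (by omega)
  set c : ℕ → Finset (Fin d) := fun q => if h : pres q then h.choose else ∅ with hc
  have hcspec : ∀ q, (h : pres q) → (c q).card = q ∧ G^[p - q] (c q) = t := by
    intro q h
    have := h.choose_spec
    simp only [hc, dif_pos h]
    exact ⟨this.1, this.2.2⟩
  have hchain : ∀ q, a ≤ q → q < p → c q ⊆ c (q + 1) := by
    intro q hq hqp
    have h1 : pres q := hpresall q hq (by omega)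
    have h2 : pres (q+1) := hpresall (q+1) (by omega) (by omega)
    obtain ⟨hcard1, hh1⟩ := hcspec q h1
    obtain ⟨hcard2, hh2⟩ := hcspec (q+1) h2
    have hGc : (G (c q)).card = q + 1 := by
      rw [(hG1 (c q) (by omega) (by omega)).2, hcard1]
    have hGh : G^[p - (q+1)] (G (c q)) = t := by
      have : p - q = (p - (q+1)) + 1 := by omega
      rw [this, Function.iterate_succ_apply] at hh1
      exact hh1
    have : c (q+1) = G (c q) := huniq (q+1) _ _ hcard2 hGc (by omega) (by omega) hh2 hGh
    rw [this]
    exact (hG1 (c q) (by omega) (by omega)).1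
  have hcards : ∀ q, a ≤ q → q ≤ p → (c q).card = q :=
    fun q hq hqp => (hcspec q (hpresall q hq hqp)).1
  obtain ⟨w, hw⟩ := chain_perm hap hpd c hchain hcards
  refine ⟨w, fun s h1 h2 hh => ?_⟩
  have hpq : pres s.card := ⟨s, rfl, h1, hh⟩
  have haq : a ≤ s.card := Nat.find_min' _ hpq
  obtain ⟨hc1, hc2⟩ := hcspec s.card hpq
  have : c s.card = s := huniq s.card _ _ hc1 rfl h1 h2 hc2 hh
  rw [hw s.card haq h2, this]

end Aux

/-- combinatorial core of Theorem 1(ii): for `d ≥ 1` and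
`1 ≤ p ≤ ⌈d/2⌉`, the minimum cardinality of a family `P` of permutations of
`{0, …, d−1}` such that every nonempty subset of `{0, …, d−1}` of cardinality at most `p`
is a prefix set of some member of `P` is exactly `C(d, p)`. A prefix set of a permutation
`w` is `{w(0), …, w(k−1)}` for some `1 ≤ k ≤ d`. -/
theorem min_permutation_family_small_subsets (d p : ℕ) (hd : 1 ≤ d)
    (hp1 : 1 ≤ p) (hp2 : p ≤ (d + 1) / 2) :
    IsLeast
      {n : ℕ | ∃ P : Finset (Equiv.Perm (Fin d)), P.card = n ∧
        ∀ s : Finset (Fin d), s.Nonempty → s.card ≤ p →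
          ∃ w ∈ P, ∃ k : ℕ, 1 ≤ k ∧ k ≤ d ∧
            s = Finset.image (fun i : Fin d => w i)
              (Finset.univ.filter (fun i : Fin d => (i : ℕ) < k))}
      (Nat.choose d p) := by
  classical
  have hpd : p ≤ d := by omega
  constructor
  · -- membership: construction of a family of size C(d,p)
    obtain ⟨G, hG1, hG2⟩ := exists_G (d := d) p (by omega)
    have hW : ∀ t : Finset (Fin d), ∃ w : Equiv.Perm (Fin d), t.card = p →
        ∀ s : Finset (Fin d), 1 ≤ s.card → s.card ≤ p → G^[p - s.card] s = t →
          prefSet w s.card = s := by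
      intro t
      by_cases h : t.card = p
      · obtain ⟨w, hw⟩ := exists_good_perm p hp1 hpd G hG1 hG2 t h
        exact ⟨w, fun _ => hw⟩
      · exact ⟨1, fun hc => absurd hc h⟩
    choose W hWs using hW
    refine ⟨(Finset.univ.powersetCard p).image W, ?_, ?_⟩
    · rw [Finset.card_image_of_injOn, Finset.card_powersetCard, Finset.card_univ,
        Fintype.card_fin]
      intro u hu u' hu' hWW
      rw [Finset.mem_coe, Finset.mem_powersetCard_univ] at hu hu'
      have h1 : prefSet (W u) u.card = u := hWs u hu u (by omega) (by omega)
        (by rw [hu]; simp)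
      have h2 : prefSet (W u') u'.card = u' := hWs u' hu' u' (by omega) (by omega)
        (by rw [hu']; simp)
      rw [← h1, ← h2, hu, hu', hWW]
    · intro s hsne hsle
      have h1 : 1 ≤ s.card := hsne.card_pos
      set t := G^[p - s.card] s with hts
      have htc : t.card = p := by
        have := (iter_facts p G hG1 (p - s.card) s h1 (by omega)).2
        rw [← hts] at this
        omega
      refine ⟨W t, Finset.mem_image_of_mem _ (Finset.mem_powersetCard_univ.2 htc),
        s.card, h1, by omega, ?_⟩
      exact (hWs t htc s h1 hsle rfl).symm
  · -- lower bound
    rintro n ⟨P, hPcard, hcov⟩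
    have key : ∀ u ∈ Finset.univ.powersetCard p, ∃ w ∈ P, u = prefSet w p := by
      intro u hu
      rw [Finset.mem_powersetCard_univ] at hu
      have hne : u.Nonempty := Finset.card_pos.1 (by omega)
      obtain ⟨w, hwP, k, hk1, hkd, hkt⟩ := hcov u hne (le_of_eq hu)
      have hkcard : u.card = k := by
        rw [show u = prefSet w k from hkt, prefSet_card w hkd]
      have hkp : k = p := by omega
      subst hkp
      exact ⟨w, hwP, hkt⟩
    set F : Finset (Fin d) → Equiv.Perm (Fin d) := fun u =>
      if h : ∃ w ∈ P, u = prefSet w p then h.choose else 1 with hF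
    have hFs : ∀ u ∈ Finset.univ.powersetCard p, F u ∈ P ∧ u = prefSet (F u) p := by
      intro u hu
      have h := key u hu
      simp only [hF, dif_pos h]
      exact ⟨h.choose_spec.1, h.choose_spec.2⟩
    have hle := Finset.card_le_card_of_injOn F (fun u hu => (hFs u hu).1) ?_
    · rw [Finset.card_powersetCard, Finset.card_univ, Fintype.card_fin] at hle
      rw [← hPcard]
      exact hle
    · intro u hu u' hu' hFF
      rw [Finset.mem_coe] at hu hu'
      rw [(hFs u hu).2, (hFs u' hu').2, hFF]
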